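/- arXiv:2210.07029 — 2 statements merged into one kernel-verified Lean document; each statement's English description precedes it below -/
import Mathlib

section
/- K_ν(ρ) ~ √(π/(2ρ)) e^{-ρ} as ρ → +∞, i.e. the limit of K_ν(ρ) / (√(π/(2ρ)) e^{-ρ}) as ρ → +∞ equals 1, for every real ν. -/
open MeasureTheory Real Filter

noncomputable def besselK (ν ρ : ℝ) : ℝ :=
  (1 / 2) * (ρ / 2) ^ ν * ∫ t in Set.Ioi (0 : ℝ), Real.exp (-t - ρ ^ 2 / (4 * t)) * t ^ (-ν - 1)


lemma coshA (h : ℝ) : 1 + h ^ 2 / 2 ≤ Real.cosh h := by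
  have e : Real.cosh h = 2 * Real.sinh (h / 2) ^ 2 + 1 := by
    have := Real.cosh_two_mul (h / 2)
    have h2 : 2 * (h / 2) = h := by ring
    rw [h2] at this
    rw [this, Real.cosh_sq]; ring
  have hs : (h / 2) ^ 2 ≤ Real.sinh (h / 2) ^ 2 := by
    have : |h / 2| ≤ |Real.sinh (h / 2)| := by
      rw [Real.abs_sinh]
      exact Real.self_le_sinh_iff.2 (abs_nonneg _)
    calc (h/2)^2 = |h/2|^2 := (sq_abs _).symm
    _ ≤ |Real.sinh (h/2)|^2 := pow_le_pow_left₀ (abs_nonneg _) this 2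
    _ = Real.sinh (h/2)^2 := sq_abs _
  rw [e]; nlinarith [hs]

lemma coshB {h : ℝ} (hh : |h| ≤ 1) : Real.cosh h ≤ 1 + h ^ 2 / 2 + h ^ 4 := by
  have b1 := Real.exp_bound hh (n := 4) (by norm_num)
  have b2 := Real.exp_bound (x := -h) (by rwa [abs_neg]) (n := 4) (by norm_num)
  rw [Real.cosh_eq]
  simp only [Finset.sum_range_succ, Finset.sum_range_zero, Nat.factorial] at b1 b2
  norm_num at b1 b2
  rw [abs_le] at b1 b2
  have h4 : |h| ^ 4 = h ^ 4 := by
    rw [← abs_pow, abs_of_nonneg (by positivity)]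
  rw [h4] at b1 b2
  nlinarith [b1.1, b1.2, b2.1, b2.2]


lemma besselK_eq (ν : ℝ) {ρ : ℝ} (hρ : 0 < ρ) :
    besselK ν ρ = (2 * Real.sqrt ρ)⁻¹ *
      ∫ x : ℝ, Real.exp (-(ρ * Real.cosh (x / Real.sqrt ρ)) - ν * (x / Real.sqrt ρ)) := by
  set s := Real.sqrt ρ with hsdef
  have hs : 0 < s := Real.sqrt_pos.2 hρ
  have hs2 : s ^ 2 = ρ := Real.sq_sqrt hρ.le
  set f : ℝ → ℝ := fun x => ρ / 2 * Real.exp (x / s) with hf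
  set f' : ℝ → ℝ := fun x => ρ / 2 * (Real.exp (x / s) * (1 / s)) with hf'
  set g : ℝ → ℝ := fun t => Real.exp (-t - ρ ^ 2 / (4 * t)) * t ^ (-ν - 1) with hg
  have hderiv : ∀ x ∈ (Set.univ : Set ℝ), HasDerivWithinAt f (f' x) Set.univ x := by
    intro x _
    exact (((hasDerivAt_id x).div_const s).exp.const_mul (ρ / 2)).hasDerivWithinAt
  have hinj : Set.InjOn f Set.univ := by
    intro a _ b _ hab
    simp only [hf] at hab
    have h1 : Real.exp (a / s) = Real.exp (b / s) :=
      mul_left_cancel₀ (by positivity) hab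
    have := Real.exp_injective h1
    field_simp at this
    exact this
  have himg : f '' Set.univ = Set.Ioi (0 : ℝ) := by
    ext t
    simp only [Set.image_univ, Set.mem_range, Set.mem_Ioi]
    constructor
    · rintro ⟨x, rfl⟩; positivity
    · intro ht
      refine ⟨s * Real.log (t / (ρ / 2)), ?_⟩
      show ρ / 2 * Real.exp (s * Real.log (t / (ρ / 2)) / s) = t
      have : s * Real.log (t / (ρ / 2)) / s = Real.log (t / (ρ / 2)) := by
        field_simp
      rw [this, Real.exp_log (by positivity)]
      field_simp
  have cov := integral_image_eq_integral_abs_deriv_smul MeasurableSet.univ hderiv hinj g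
  rw [himg, Measure.restrict_univ] at cov
  have eq1 : ∀ x : ℝ, |f' x| • g (f x) =
      s / 2 * (ρ / 2) ^ (-ν - 1) * Real.exp (-(ρ * Real.cosh (x / s)) - ν * (x / s)) := by
    intro x
    have hex : (0:ℝ) < Real.exp (x / s) := Real.exp_pos _
    have habs : |f' x| = s / 2 * Real.exp (x / s) := by
      have hfx : f' x = s / 2 * Real.exp (x / s) := by
        show ρ / 2 * (Real.exp (x / s) * (1 / s)) = s / 2 * Real.exp (x / s)
        field_simp
        rw [← hs2]
      rw [hfx, abs_of_pos (by positivity)]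
    have hexp : -(f x) - ρ ^ 2 / (4 * f x) = -(ρ * Real.cosh (x / s)) := by
      show -(ρ / 2 * Real.exp (x / s)) - ρ ^ 2 / (4 * (ρ / 2 * Real.exp (x / s))) = -(ρ * Real.cosh (x / s))
      rw [Real.cosh_eq, Real.exp_neg]
      have he := (Real.exp_pos (x / s)).ne'
      field_simp
      ring
    have hpow : (f x) ^ (-ν - 1) = (ρ / 2) ^ (-ν - 1) * Real.exp (x / s * (-ν - 1)) := by
      show (ρ / 2 * Real.exp (x / s)) ^ (-ν - 1) = (ρ / 2) ^ (-ν - 1) * Real.exp (x / s * (-ν - 1))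
      rw [Real.mul_rpow (by positivity) hex.le, Real.exp_mul]
    simp only [smul_eq_mul, hg]
    rw [hexp, habs, hpow]
    have hcomb : Real.exp (-(ρ * Real.cosh (x / s)) - ν * (x / s)) =
        Real.exp (x / s) * (Real.exp (-(ρ * Real.cosh (x / s))) * Real.exp (x / s * (-ν - 1))) := by
      rw [← Real.exp_add, ← Real.exp_add]; ring_nf
    rw [hcomb]; ring
  have eq2 : (∫ x : ℝ, |f' x| • g (f x)) =
      s / 2 * (ρ / 2) ^ (-ν - 1) * ∫ x : ℝ, Real.exp (-(ρ * Real.cosh (x / s)) - ν * (x / s)) := by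
    rw [← integral_const_mul]
    exact integral_congr_ae (Filter.Eventually.of_forall fun x => eq1 x)
  rw [besselK, ← hg, cov, eq2]
  rw [show (1:ℝ)/2 * (ρ/2) ^ ν * (s / 2 * (ρ/2) ^ (-ν-1) * ∫ x : ℝ, Real.exp (-(ρ * Real.cosh (x / s)) - ν * (x / s)))
      = ((ρ/2) ^ ν * (ρ/2) ^ (-ν-1)) * (s / 4) * ∫ x : ℝ, Real.exp (-(ρ * Real.cosh (x / s)) - ν * (x / s)) by ring]
  rw [← Real.rpow_add (by positivity), show ν + (-ν - 1) = -1 by ring, Real.rpow_neg_one]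
  congr 1
  rw [← hs2]
  field_simp
  ring

lemma key (ν : ℝ) :
    Tendsto (fun ρ : ℝ => ∫ x : ℝ,
        Real.exp (-(ρ * (Real.cosh (x / Real.sqrt ρ) - 1)) - ν * (x / Real.sqrt ρ)))
      atTop (nhds (Real.sqrt (2 * Real.pi))) := by
  have hlim : (∫ x : ℝ, Real.exp (-(x ^ 2 / 2))) = Real.sqrt (2 * Real.pi) := by
    have h := integral_gaussian (1/2 : ℝ)
    rw [show (fun x : ℝ => Real.exp (-(x ^ 2 / 2))) = fun x : ℝ => Real.exp (-(1/2) * x ^ 2) by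
      funext x; ring_nf]
    rw [h]
    norm_num
    ring
  rw [← hlim]
  apply tendsto_integral_filter_of_dominated_convergence
    (bound := fun x : ℝ => Real.exp (ν ^ 2) * Real.exp (-(1/4) * x ^ 2))
  · filter_upwards [eventually_ge_atTop (1 : ℝ)] with ρ hρ1
    apply Continuous.aestronglyMeasurable
    fun_prop
  · filter_upwards [eventually_ge_atTop (1 : ℝ)] with ρ hρ1
    apply Eventually.of_forall
    intro x
    have hρ : (0:ℝ) < ρ := lt_of_lt_of_le one_pos hρ1
    have hs : (0:ℝ) < Real.sqrt ρ := Real.sqrt_pos.2 hρ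
    have hs1 : (1:ℝ) ≤ Real.sqrt ρ := by
      rw [show (1:ℝ) = Real.sqrt 1 from (Real.sqrt_one).symm]
      exact Real.sqrt_le_sqrt hρ1
    have hhs : (x / Real.sqrt ρ) ^ 2 = x ^ 2 / ρ := by
      rw [div_pow, Real.sq_sqrt hρ.le]
    have h1 : x ^ 2 / 2 ≤ ρ * (Real.cosh (x / Real.sqrt ρ) - 1) := by
      calc x ^ 2 / 2 = ρ * ((x / Real.sqrt ρ) ^ 2 / 2) := by
            rw [hhs]; field_simp
        _ ≤ ρ * (Real.cosh (x / Real.sqrt ρ) - 1) :=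
            mul_le_mul_of_nonneg_left (by linarith [coshA (x / Real.sqrt ρ)]) hρ.le
    have h2 : -(ν * (x / Real.sqrt ρ)) ≤ |ν| * |x| := by
      calc -(ν * (x / Real.sqrt ρ)) ≤ |ν * (x / Real.sqrt ρ)| := neg_le_abs _
        _ = |ν| * (|x| / Real.sqrt ρ) := by
            rw [abs_mul, abs_div, abs_of_pos hs]
        _ ≤ |ν| * |x| := by
            apply mul_le_mul_of_nonneg_left _ (abs_nonneg ν)
            exact div_le_self (abs_nonneg x) hs1
    rw [Real.norm_eq_abs, abs_of_pos (Real.exp_pos _), ← Real.exp_add, Real.exp_le_exp]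
    nlinarith [sq_nonneg (|ν| - |x| / 2), sq_abs x, sq_abs ν]
  · exact (Integrable.const_mul (integrable_exp_neg_mul_sq (by norm_num : (0:ℝ) < 1/4)) _)
  · apply Eventually.of_forall
    intro x
    have hsq : Tendsto Real.sqrt atTop atTop := by
      apply tendsto_atTop_atTop.2
      intro b
      refine ⟨b ^ 2, fun a ha => ?_⟩
      calc b ≤ |b| := le_abs_self b
        _ = Real.sqrt (b ^ 2) := (Real.sqrt_sq_eq_abs b).symm
        _ ≤ Real.sqrt a := Real.sqrt_le_sqrt ha
    have T2 : Tendsto (fun ρ : ℝ => ν * (x / Real.sqrt ρ)) atTop (nhds 0) := by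
      have := Tendsto.div_atTop (tendsto_const_nhds (x := x)) hsq
      have := this.const_mul ν
      simpa using this
    have hD : Tendsto (fun ρ : ℝ => ρ * (Real.cosh (x / Real.sqrt ρ) - 1) - x ^ 2 / 2)
        atTop (nhds 0) := by
      apply tendsto_of_tendsto_of_tendsto_of_le_of_le' tendsto_const_nhds
        (Tendsto.div_atTop (tendsto_const_nhds (x := x ^ 4)) tendsto_id)
      · filter_upwards [eventually_ge_atTop (max 1 (x ^ 2))] with ρ hρ'
        have hρ : (0:ℝ) < ρ := lt_of_lt_of_le one_pos (le_trans (le_max_left _ _) hρ')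
        have hhs : (x / Real.sqrt ρ) ^ 2 = x ^ 2 / ρ := by
          rw [div_pow, Real.sq_sqrt hρ.le]
        have e1 : ρ * ((x / Real.sqrt ρ) ^ 2 / 2) = x ^ 2 / 2 := by rw [hhs]; field_simp
        have := mul_le_mul_of_nonneg_left (by linarith [coshA (x / Real.sqrt ρ)] :
          (x / Real.sqrt ρ) ^ 2 / 2 ≤ Real.cosh (x / Real.sqrt ρ) - 1) hρ.le
        linarith [e1, this]
      · filter_upwards [eventually_ge_atTop (max 1 (x ^ 2))] with ρ hρ'
        have hρ : (0:ℝ) < ρ := lt_of_lt_of_le one_pos (le_trans (le_max_left _ _) hρ')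
        have hhs : (x / Real.sqrt ρ) ^ 2 = x ^ 2 / ρ := by
          rw [div_pow, Real.sq_sqrt hρ.le]
        have habs1 : |x / Real.sqrt ρ| ≤ 1 := by
          rw [← Real.sqrt_sq_eq_abs, show (1:ℝ) = Real.sqrt 1 from (Real.sqrt_one).symm]
          apply Real.sqrt_le_sqrt
          rw [hhs]
          rw [div_le_one hρ]
          exact le_trans (le_max_right _ _) hρ'
        have hB := coshB habs1
        have e1 : ρ * ((x / Real.sqrt ρ) ^ 2 / 2) = x ^ 2 / 2 := by rw [hhs]; field_simp
        have e2 : ρ * ((x / Real.sqrt ρ) ^ 2 / 2 + (x / Real.sqrt ρ) ^ 4) =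
            x ^ 2 / 2 + x ^ 4 / ρ := by
          rw [show (x / Real.sqrt ρ) ^ 4 = ((x / Real.sqrt ρ) ^ 2) ^ 2 by ring, hhs]
          field_simp
        have := mul_le_mul_of_nonneg_left (by linarith [hB] :
          Real.cosh (x / Real.sqrt ρ) - 1 ≤ (x / Real.sqrt ρ) ^ 2 / 2 + (x / Real.sqrt ρ) ^ 4)
          hρ.le
        simp only [id_eq]
        linarith [e2, this]
    have T1 : Tendsto (fun ρ : ℝ => ρ * (Real.cosh (x / Real.sqrt ρ) - 1))
        atTop (nhds (x ^ 2 / 2)) := by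
      have := hD.add_const (x ^ 2 / 2)
      simpa using this
    have T3 : Tendsto (fun ρ : ℝ => -(ρ * (Real.cosh (x / Real.sqrt ρ) - 1)) - ν * (x / Real.sqrt ρ))
        atTop (nhds (-(x ^ 2 / 2))) := by
      have := T1.neg.sub T2
      simpa using this
    exact (Real.continuous_exp.continuousAt.tendsto.comp T3)

theorem stmt_5 (ν : ℝ) :
    Tendsto (fun ρ => besselK ν ρ / (Real.sqrt (Real.pi / (2 * ρ)) * Real.exp (-ρ)))
      atTop (nhds 1) := by
  have hne : Real.sqrt (2 * Real.pi) ≠ 0 := by positivity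
  have final := (key ν).const_mul (Real.sqrt (2 * Real.pi))⁻¹
  rw [inv_mul_cancel₀ hne] at final
  apply Tendsto.congr' _ final
  filter_upwards [eventually_gt_atTop (0 : ℝ)] with ρ hρ
  have hs : (0:ℝ) < Real.sqrt ρ := Real.sqrt_pos.2 hρ
  have hS : (0:ℝ) < Real.sqrt (Real.pi / (2 * ρ)) :=
    Real.sqrt_pos.2 (by positivity)
  have hsplit : (∫ x : ℝ, Real.exp (-(ρ * Real.cosh (x / Real.sqrt ρ)) - ν * (x / Real.sqrt ρ)))
      = Real.exp (-ρ) * ∫ x : ℝ,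
        Real.exp (-(ρ * (Real.cosh (x / Real.sqrt ρ) - 1)) - ν * (x / Real.sqrt ρ)) := by
    rw [← integral_const_mul]
    apply integral_congr_ae
    apply Eventually.of_forall
    intro x
    dsimp only
    rw [← Real.exp_add]
    congr 1
    ring
  have h22 : Real.sqrt 2 * Real.sqrt 2 = 2 := Real.mul_self_sqrt (by norm_num)
  have hkey : (2 * Real.sqrt ρ) * Real.sqrt (Real.pi / (2 * ρ)) = Real.sqrt (2 * Real.pi) := by
    rw [Real.sqrt_mul (by norm_num) Real.pi, Real.sqrt_div Real.pi_pos.le,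
      Real.sqrt_mul (by norm_num) ρ]
    field_simp
    linear_combination (-1 : ℝ) * h22
  have hS' : Real.sqrt (Real.pi / (2 * ρ)) = Real.sqrt (2 * Real.pi) * (2 * Real.sqrt ρ)⁻¹ := by
    rw [← hkey]
    field_simp
  symm
  rw [besselK_eq ν hρ, hsplit]
  set I : ℝ := ∫ x : ℝ,
    Real.exp (-(ρ * (Real.cosh (x / Real.sqrt ρ) - 1)) - ν * (x / Real.sqrt ρ)) with hI
  rw [div_eq_iff (by positivity), hS']
  field_simp
end

section
/- For every ρ > 0, ∫_ρ^∞ (cosh r − cosh ρ)^{-1/2} dr ≤ (Γ(1/4)/Γ(3/4)) · √(π / sinh ρ). -/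
open MeasureTheory Real Set

-- real beta value
lemma beta_val' :
    ∫ t in (0:ℝ)..1, t ^ (-(3/4) : ℝ) * (1 - t) ^ (-(1/2) : ℝ)
      = Real.Gamma (1/4) * Real.Gamma (1/2) / Real.Gamma (3/4) := by
  have h := Complex.Gamma_mul_Gamma_eq_betaIntegral
    (s := ((1/4 : ℝ) : ℂ)) (t := ((1/2 : ℝ) : ℂ)) (by norm_num) (by norm_num)
  have key : Complex.betaIntegral ((1/4 : ℝ) : ℂ) ((1/2 : ℝ) : ℂ)
      = ((∫ t in (0:ℝ)..1, t ^ (-(3/4):ℝ) * (1-t) ^ (-(1/2):ℝ) : ℝ) : ℂ) := by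
    rw [Complex.betaIntegral, ← intervalIntegral.integral_ofReal]
    apply intervalIntegral.integral_congr
    intro x hx
    rw [Set.uIcc_of_le zero_le_one] at hx
    have h1 : (0:ℝ) ≤ x := hx.1
    have h2 : (0:ℝ) ≤ 1 - x := by linarith [hx.2]
    push_cast
    rw [Complex.ofReal_cpow h1, Complex.ofReal_cpow h2]
    push_cast
    norm_num
  rw [key] at h
  have h34 : ((1/4 : ℝ) : ℂ) + ((1/2 : ℝ) : ℂ) = ((3/4 : ℝ) : ℂ) := by push_cast; ring
  rw [h34, Complex.Gamma_ofReal, Complex.Gamma_ofReal, Complex.Gamma_ofReal] at h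
  have hΓ : Real.Gamma (3/4) ≠ 0 := (Real.Gamma_pos_of_pos (by norm_num)).ne'
  have : Real.Gamma (1/4) * Real.Gamma (1/2)
      = Real.Gamma (3/4) * ∫ t in (0:ℝ)..1, t ^ (-(3/4):ℝ) * (1-t) ^ (-(1/2):ℝ) := by
    exact_mod_cast h
  field_simp
  linarith [this]

lemma beta_integrable :
    IntegrableOn (fun t : ℝ => t ^ (-(3/4):ℝ) * (1-t) ^ (-(1/2):ℝ)) (Ioo 0 1) := by
  have h := Complex.betaIntegral_convergent (u := ((1/4:ℝ):ℂ)) (v := ((1/2:ℝ):ℂ))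
    (by norm_num) (by norm_num)
  rw [intervalIntegrable_iff_integrableOn_Ioo_of_le zero_le_one] at h
  have := h.norm
  refine IntegrableOn.congr_fun this (fun x hx => ?_) measurableSet_Ioo
  have hx0 : (0:ℝ) < x := hx.1
  have hx1 : (0:ℝ) < 1 - x := by linarith [hx.2]
  rw [norm_mul]
  have e1 : ‖(x:ℂ) ^ (((1/4:ℝ):ℂ) - 1)‖ = x ^ (-(3/4):ℝ) := by
    rw [Complex.norm_cpow_eq_rpow_re_of_pos hx0]
    norm_num
  have e2 : ‖(1 - (x:ℂ)) ^ (((1/2:ℝ):ℂ) - 1)‖ = (1-x) ^ (-(1/2):ℝ) := by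
    have : (1 - (x:ℂ)) = ((1-x : ℝ) : ℂ) := by push_cast; ring
    rw [this, Complex.norm_cpow_eq_rpow_re_of_pos hx1]
    norm_num
  rw [e1, e2]

lemma image_exp_neg : (fun r : ℝ => Real.exp (-r)) '' (Ioi 0) = Ioo 0 1 := by
  ext t
  constructor
  · rintro ⟨r, hr, rfl⟩
    exact ⟨Real.exp_pos _, Real.exp_lt_one_iff.mpr (by simpa using hr)⟩
  · rintro ⟨ht0, ht1⟩
    exact ⟨-Real.log t, by simpa using Real.log_neg ht0 ht1, by
      simp [Real.exp_log ht0]⟩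

lemma exp_neg_deriv {x : ℝ} (hx : x ∈ Ioi (0:ℝ)) :
    HasDerivWithinAt (fun r : ℝ => Real.exp (-r)) (-Real.exp (-x)) (Ioi 0) x := by
  have : HasDerivAt (fun r : ℝ => Real.exp (-r)) (-Real.exp (-x)) x := by
    simpa [Function.comp_def] using (Real.hasDerivAt_exp (-x)).comp x ((hasDerivAt_id x).neg)
  exact this.hasDerivWithinAt

lemma exp_neg_inj : Set.InjOn (fun r : ℝ => Real.exp (-r)) (Ioi 0) := by
  intro a _ b _ h
  have := Real.exp_injective h
  linarith [neg_injective this]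

lemma sinh_half_eq {x : ℝ} (hx : 0 < x) :
    Real.exp (-x) * ((Real.exp (-x)) ^ (-(3/4):ℝ) * (1 - Real.exp (-x)) ^ (-(1/2):ℝ))
      = (2:ℝ) ^ (-(1/2):ℝ) * Real.sinh (x/2) ^ (-(1/2):ℝ) := by
  have hlt : Real.exp (-x) < 1 := Real.exp_lt_one_iff.mpr (by linarith)
  have h2 : (0:ℝ) < 1 - Real.exp (-x) := by linarith
  have h1 : Real.sinh (x/2) = Real.exp (x/2) * (1 - Real.exp (-x)) / 2 := by
    rw [Real.sinh_eq, show -(x/2) = x/2 + -x by ring, Real.exp_add]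
    ring
  rw [h1, Real.div_rpow (by positivity) (by norm_num),
    Real.mul_rpow (Real.exp_nonneg _) h2.le, ← Real.exp_mul, ← Real.exp_mul]
  have h3 : ((2:ℝ) ^ (-(1/2):ℝ)) ≠ 0 := by positivity
  rw [show rexp (-x) * (rexp (-x * -(3 / 4)) * (1 - rexp (-x)) ^ (-(1/2):ℝ))
      = (rexp (-x) * rexp (-x * -(3 / 4))) * (1 - rexp (-x)) ^ (-(1/2):ℝ) by ring,
    ← Real.exp_add]
  field_simp
  ring_nf

noncomputable def stmt7_B : ℝ := Real.Gamma (1/4) * Real.Gamma (1/2) / Real.Gamma (3/4)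

lemma smul_eq_on (x : ℝ) (hx : x ∈ Ioi (0:ℝ)) :
    |(-Real.exp (-x))| • ((Real.exp (-x)) ^ (-(3/4):ℝ) * (1 - Real.exp (-x)) ^ (-(1/2):ℝ))
      = (2:ℝ) ^ (-(1/2):ℝ) * Real.sinh (x/2) ^ (-(1/2):ℝ) := by
  rw [abs_neg, abs_of_pos (Real.exp_pos _), smul_eq_mul]
  exact sinh_half_eq hx

lemma sinh_scaled_integrable :
    IntegrableOn (fun x : ℝ => (2:ℝ) ^ (-(1/2):ℝ) * Real.sinh (x/2) ^ (-(1/2):ℝ)) (Ioi 0) := by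
  have h := (integrableOn_image_iff_integrableOn_abs_deriv_smul measurableSet_Ioi
    (fun x hx => exp_neg_deriv hx) exp_neg_inj
    (fun t : ℝ => t ^ (-(3/4):ℝ) * (1-t) ^ (-(1/2):ℝ))).mp (by rw [image_exp_neg]; exact beta_integrable)
  exact IntegrableOn.congr_fun h (fun x hx => smul_eq_on x hx) measurableSet_Ioi

lemma sinh_integrable :
    IntegrableOn (fun x : ℝ => Real.sinh (x/2) ^ (-(1/2):ℝ)) (Ioi 0) := by
  have h := sinh_scaled_integrable.const_mul ((2:ℝ) ^ ((1/2):ℝ))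
  refine IntegrableOn.congr_fun h (fun x _ => ?_) measurableSet_Ioi
  rw [← mul_assoc, ← Real.rpow_add (by norm_num : (0:ℝ) < 2)]
  norm_num

lemma sinh_int_val :
    ∫ x in Ioi (0:ℝ), Real.sinh (x/2) ^ (-(1/2):ℝ) = (2:ℝ) ^ ((1/2):ℝ) * stmt7_B := by
  have h := integral_image_eq_integral_abs_deriv_smul measurableSet_Ioi
    (fun x hx => exp_neg_deriv hx) exp_neg_inj
    (fun t : ℝ => t ^ (-(3/4):ℝ) * (1-t) ^ (-(1/2):ℝ))
  rw [image_exp_neg] at h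
  have hB : ∫ t in Ioo (0:ℝ) 1, t ^ (-(3/4):ℝ) * (1-t) ^ (-(1/2):ℝ) = stmt7_B := by
    rw [← MeasureTheory.integral_Ioc_eq_integral_Ioo,
      ← intervalIntegral.integral_of_le zero_le_one]
    exact beta_val'
  have h2 : ∫ x in Ioi (0:ℝ), (2:ℝ) ^ (-(1/2):ℝ) * Real.sinh (x/2) ^ (-(1/2):ℝ) = stmt7_B := by
    rw [← hB, h]
    exact (setIntegral_congr_fun measurableSet_Ioi (fun x hx => smul_eq_on x hx)).symm
  rw [MeasureTheory.integral_const_mul] at h2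
  have hne : ((2:ℝ) ^ (-(1/2):ℝ)) ≠ 0 := by positivity
  rw [← h2, ← mul_assoc, ← Real.rpow_add (by norm_num : (0:ℝ) < 2)]
  norm_num

lemma cosh_sub_cosh' (a b : ℝ) :
    Real.cosh a - Real.cosh b = 2 * Real.sinh ((a+b)/2) * Real.sinh ((a-b)/2) := by
  rw [show Real.cosh a = Real.cosh ((a+b)/2 + (a-b)/2) by rw [show (a+b)/2 + (a-b)/2 = a by ring],
      show Real.cosh b = Real.cosh ((a+b)/2 - (a-b)/2) by rw [show (a+b)/2 - (a-b)/2 = b by ring],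
      Real.cosh_add, Real.cosh_sub]
  ring

lemma sub_deriv (ρ : ℝ) {x : ℝ} (hx : x ∈ Ioi ρ) :
    HasDerivWithinAt (fun r : ℝ => r - ρ) 1 (Ioi ρ) x :=
  ((hasDerivAt_id x).sub_const ρ).hasDerivWithinAt

lemma sub_inj (ρ : ℝ) : Set.InjOn (fun r : ℝ => r - ρ) (Ioi ρ) :=
  fun a _ b _ h => by dsimp at h; linarith

lemma sub_image (ρ : ℝ) : (fun r : ℝ => r - ρ) '' (Ioi ρ) = Ioi 0 := by
  rw [Set.image_sub_const_Ioi, sub_self]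

lemma shift_int (ρ : ℝ) :
    IntegrableOn (fun r : ℝ => Real.sinh ((r - ρ)/2) ^ (-(1/2):ℝ)) (Ioi ρ) := by
  have h := (integrableOn_image_iff_integrableOn_abs_deriv_smul measurableSet_Ioi
    (fun x hx => sub_deriv ρ hx) (sub_inj ρ)
    (fun x : ℝ => Real.sinh (x/2) ^ (-(1/2):ℝ))).mp
    (by rw [sub_image]; exact sinh_integrable)
  refine IntegrableOn.congr_fun h (fun x _ => ?_) measurableSet_Ioi
  simp

lemma shift_eq (ρ : ℝ) :
    ∫ r in Ioi ρ, Real.sinh ((r - ρ)/2) ^ (-(1/2):ℝ)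
      = ∫ x in Ioi (0:ℝ), Real.sinh (x/2) ^ (-(1/2):ℝ) := by
  have h := integral_image_eq_integral_abs_deriv_smul measurableSet_Ioi
    (fun x hx => sub_deriv ρ hx) (sub_inj ρ)
    (fun x : ℝ => Real.sinh (x/2) ^ (-(1/2):ℝ))
  rw [sub_image] at h
  rw [h]
  apply setIntegral_congr_fun measurableSet_Ioi
  intro x _
  simp

lemma arith {s : ℝ} (hs : 0 < s) :
    (2*s) ^ (-(1/2):ℝ) * ((2:ℝ) ^ ((1/2):ℝ) * (Real.Gamma (1/4) * Real.Gamma (1/2) / Real.Gamma (3/4)))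
      = (Real.Gamma (1/4) / Real.Gamma (3/4)) * Real.sqrt (π / s) := by
  rw [Real.Gamma_one_half_eq]
  have h1 : (2*s) ^ (-(1/2):ℝ) = (Real.sqrt (2*s))⁻¹ := by
    rw [Real.rpow_neg (by positivity), Real.sqrt_eq_rpow]
  have h2 : ((2:ℝ)) ^ ((1/2):ℝ) = Real.sqrt 2 := by
    rw [Real.sqrt_eq_rpow]
  rw [h1, h2, Real.sqrt_mul (by norm_num) s, Real.sqrt_div Real.pi_pos.le]
  have n1 : Real.sqrt 2 ≠ 0 := by positivity
  have n2 : Real.sqrt s ≠ 0 := by positivity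
  field_simp

lemma sinh_int_val_expanded :
    ∫ x in Ioi (0:ℝ), Real.sinh (x/2) ^ (-(1/2):ℝ)
      = (2:ℝ) ^ ((1/2):ℝ) * (Real.Gamma (1/4) * Real.Gamma (1/2) / Real.Gamma (3/4)) :=
  sinh_int_val

theorem stmt_7 (ρ : ℝ) (hρ : 0 < ρ) :
    (∫ r in Set.Ioi ρ, (Real.cosh r - Real.cosh ρ) ^ (-(1 / 2) : ℝ))
      ≤ (Real.Gamma (1 / 4) / Real.Gamma (3 / 4)) * Real.sqrt (Real.pi / Real.sinh ρ) := by
  have hsρ : 0 < Real.sinh ρ := by rwa [Real.sinh_pos_iff]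
  set c : ℝ := (2 * Real.sinh ρ) ^ (-(1/2):ℝ) with hc
  have hgi : IntegrableOn (fun r : ℝ => c * Real.sinh ((r - ρ)/2) ^ (-(1/2):ℝ)) (Ioi ρ) :=
    (shift_int ρ).const_mul c
  have hmono : (∫ r in Set.Ioi ρ, (Real.cosh r - Real.cosh ρ) ^ (-(1 / 2) : ℝ))
      ≤ ∫ r in Ioi ρ, c * Real.sinh ((r - ρ)/2) ^ (-(1/2):ℝ) := by
    apply integral_mono_of_nonneg
    · rw [Filter.EventuallyLE, ae_restrict_iff' measurableSet_Ioi]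
      filter_upwards with r hr
      have : Real.cosh ρ ≤ Real.cosh r := by
        rw [Real.cosh_le_cosh, abs_of_pos hρ, abs_of_pos (hρ.trans hr)]
        exact le_of_lt hr
      exact Real.rpow_nonneg (by linarith) _
    · exact hgi
    · rw [Filter.EventuallyLE, ae_restrict_iff' measurableSet_Ioi]
      filter_upwards with r hr
      have hrρ : ρ < r := hr
      have hs2 : 0 < Real.sinh ((r - ρ)/2) := by rw [Real.sinh_pos_iff]; linarith
      have hmono2 : Real.sinh ρ ≤ Real.sinh ((r + ρ)/2) := by
        rw [Real.sinh_le_sinh]; linarith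
      have hlow : 0 < 2 * Real.sinh ρ * Real.sinh ((r - ρ)/2) := by positivity
      have hle : 2 * Real.sinh ρ * Real.sinh ((r - ρ)/2) ≤ Real.cosh r - Real.cosh ρ := by
        rw [cosh_sub_cosh' r ρ]
        nlinarith
      calc (Real.cosh r - Real.cosh ρ) ^ (-(1/2):ℝ)
          ≤ (2 * Real.sinh ρ * Real.sinh ((r - ρ)/2)) ^ (-(1/2):ℝ) :=
            Real.rpow_le_rpow_of_nonpos hlow hle (by norm_num)
        _ = c * Real.sinh ((r - ρ)/2) ^ (-(1/2):ℝ) := by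
            rw [Real.mul_rpow (by positivity) hs2.le]
  refine hmono.trans ?_
  rw [MeasureTheory.integral_const_mul, shift_eq, sinh_int_val_expanded, hc, arith hsρ]
end
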